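/- Let A = [[a,b],[c,d]] be a 2×2 matrix with quaternion entries whose first column (a,c) is nonzero. Then q(A) = 0 if and only if the second column is a right quaternionic multiple of the first, i.e. there exists a quaternion h with b = a·h and d = c·h. (Geometrically: the two columns determine the same point of the quaternionic projective line.) -/

import Mathlib

/-- The quartic `q([[a,b],[c,d]]) = |a|²|d|² + |b|²|c|² − 2 Re(a c̄ d b̄)` of a `2 × 2`
quaternionic matrix. -/
noncomputable def quartic (A : Matrix (Fin 2) (Fin 2) (Quaternion ℝ)) : ℝ :=
  Quaternion.normSq (A 0 0) * Quaternion.normSq (A 1 1) +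
    Quaternion.normSq (A 0 1) * Quaternion.normSq (A 1 0) -
    2 * (A 0 0 * star (A 1 0) * A 1 1 * star (A 0 1)).re

lemma quartic_apply (a b c d : Quaternion ℝ) :
    quartic !![a, b; c, d] = Quaternion.normSq a * Quaternion.normSq d +
      Quaternion.normSq b * Quaternion.normSq c -
      2 * (a * star c * d * star b).re := by
  simp [quartic]

lemma quartic_key (a c h e : Quaternion ℝ) :
    quartic !![a, a * h; c, c * h + e] = Quaternion.normSq a * Quaternion.normSq e := by
  rw [quartic_apply]
  simp only [Quaternion.normSq_def', Quaternion.re_mul, Quaternion.imI_mul,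
    Quaternion.imJ_mul, Quaternion.imK_mul, Quaternion.re_add, Quaternion.imI_add,
    Quaternion.imJ_add, Quaternion.imK_add, Quaternion.re_star, Quaternion.imI_star,
    Quaternion.imJ_star, Quaternion.imK_star]
  ring

lemma quartic_swap (a b c d : Quaternion ℝ) :
    quartic !![a, b; c, d] = quartic !![c, d; a, b] := by
  rw [quartic_apply, quartic_apply]
  simp only [Quaternion.normSq_def', Quaternion.re_mul, Quaternion.imI_mul,
    Quaternion.imJ_mul, Quaternion.imK_mul, Quaternion.re_star, Quaternion.imI_star,
    Quaternion.imJ_star, Quaternion.imK_star]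
  ring

lemma quartic_forward (a b c d : Quaternion ℝ) (ha : a ≠ 0)
    (hq : quartic !![a, b; c, d] = 0) : b = a * (a⁻¹ * b) ∧ d = c * (a⁻¹ * b) := by
  have hb : b = a * (a⁻¹ * b) := (mul_inv_cancel_left₀ ha b).symm
  set h := a⁻¹ * b with hh
  set e := d - c * h with he
  have hd : d = c * h + e := by rw [he]; abel
  rw [hb, hd] at hq
  rw [quartic_key] at hq
  have : Quaternion.normSq e = 0 := by
    rcases mul_eq_zero.1 hq with h1 | h1
    · exact absurd (Quaternion.normSq_eq_zero.1 h1) ha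
    · exact h1
  have he0 : e = 0 := Quaternion.normSq_eq_zero.1 this
  exact ⟨hb, by rw [hd, he0, add_zero]⟩

/-- For a `2 × 2` quaternionic matrix `[[a,b],[c,d]]` with nonzero first column `(a,c)`,
the quartic vanishes iff the second column is a right quaternionic multiple of the first,
i.e. the two columns determine the same point of the quaternionic projective line. -/
theorem quartic_eq_zero_iff_columns_dependent (a b c d : Quaternion ℝ)
    (hcol : ¬(a = 0 ∧ c = 0)) :
    quartic !![a, b; c, d] = 0 ↔ ∃ h : Quaternion ℝ, b = a * h ∧ d = c * h := by
  constructor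
  · intro hq
    by_cases ha : a = 0
    · have hc : c ≠ 0 := fun h => hcol ⟨ha, h⟩
      rw [quartic_swap] at hq
      obtain ⟨hd, hb⟩ := quartic_forward c d a b hc hq
      exact ⟨c⁻¹ * d, hb, hd⟩
    · obtain ⟨hb, hd⟩ := quartic_forward a b c d ha hq
      exact ⟨a⁻¹ * b, hb, hd⟩
  · rintro ⟨h, rfl, rfl⟩
    have := quartic_key a c h 0
    simpa using this
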